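/- Let G be a group, A ⊆ G a subset with Subgroup.closure A = ⊤, and R ⊆ G a finite subset. Let H = G ⧸ Subgroup.normalClosure R and define D_R = {(a, a⁻¹) | a ∈ A} ∪ {(a⁻¹, a) | a ∈ A} ∪ {(r, 1) | r ∈ R} ∪ {(r⁻¹, 1) | r ∈ R} ⊆ G × G. Then for every w ∈ G, the image of w in H is trivial if and only if there exists a finite list of pairs (u₁,v₁),…,(u_M,v_M), each belonging to D_R, such that w · u₁ · u₂ ⋯ u_M = v₁⁻¹ · v₂⁻¹ ⋯ v_M⁻¹ in G. (This shows that the word problem in every finitely presented quotient of G reduces to the general Post correspondence problem in G with the instance given by the pairs (u, v⁻¹) for (u,v) ∈ D_R and constant w.) -/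

import Mathlib

/-- The set of pairs `D_R` associated to a generating set `A` and a set of
relators `R` in a group `G`. -/
def pcpPairs {G : Type*} [Group G] (A R : Set G) : Set (G × G) :=
  {p | ∃ a ∈ A, p = (a, a⁻¹)} ∪ {p | ∃ a ∈ A, p = (a⁻¹, a)} ∪
  {p | ∃ r ∈ R, p = (r, 1)} ∪ {p | ∃ r ∈ R, p = (r⁻¹, 1)}

namespace PcpAux

variable {G : Type*} [Group G] (A R : Set G)

/-- The product of the first components. -/
def U (L : List (G × G)) : G := (L.map Prod.fst).prod

/-- The product of the inverses of the second components. -/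
def V (L : List (G × G)) : G := (L.map (fun p => p.2⁻¹)).prod

lemma U_append (L₁ L₂ : List (G × G)) : U (L₁ ++ L₂) = U L₁ * U L₂ := by
  simp [U]

lemma V_append (L₁ L₂ : List (G × G)) : V (L₁ ++ L₂) = V L₁ * V L₂ := by
  simp [V]

/-- The involution on pairs inverting both components. -/
def star (p : G × G) : G × G := (p.1⁻¹, p.2⁻¹)

lemma star_mem {p : G × G} (hp : p ∈ pcpPairs A R) : star p ∈ pcpPairs A R := by
  rcases hp with ((⟨a, ha, rfl⟩ | ⟨a, ha, rfl⟩) | ⟨r, hr, rfl⟩) | ⟨r, hr, rfl⟩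
  · exact Or.inl (Or.inl (Or.inr ⟨a, ha, by simp [star]⟩))
  · exact Or.inl (Or.inl (Or.inl ⟨a, ha, by simp [star]⟩))
  · exact Or.inr ⟨r, hr, by simp [star]⟩
  · exact Or.inl (Or.inr ⟨r, hr, by simp [star]⟩)

lemma U_starRev (L : List (G × G)) : U ((L.map star).reverse) = (U L)⁻¹ := by
  simp only [U, List.map_reverse, List.map_map, List.prod_reverse_noncomm]
  simp only [Function.comp_def, star, inv_inv]

lemma V_starRev (L : List (G × G)) : V ((L.map star).reverse) = (V L)⁻¹ := by
  simp only [V, List.map_reverse, List.map_map, List.prod_reverse_noncomm]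
  simp only [Function.comp_def, star, inv_inv]

/-- `Good L`: every pair of `L` lies in `pcpPairs A R`. -/
def Good (L : List (G × G)) : Prop := ∀ p ∈ L, p ∈ pcpPairs A R

lemma Good.append {L₁ L₂ : List (G × G)} (h₁ : Good A R L₁) (h₂ : Good A R L₂) :
    Good A R (L₁ ++ L₂) := by
  intro p hp
  rcases List.mem_append.1 hp with h | h
  · exact h₁ p h
  · exact h₂ p h

lemma Good.starRev {L : List (G × G)} (h : Good A R L) : Good A R ((L.map star).reverse) := by
  intro p hp
  rw [List.mem_reverse, List.mem_map] at hp
  obtain ⟨q, hq, rfl⟩ := hp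
  exact star_mem A R (h q hq)

/-- Every element of `G` can be written as a list of letter pairs, with both
products equal to it. -/
lemma exists_letters (hA : Subgroup.closure A = ⊤) (g : G) :
    ∃ L : List (G × G), Good A R L ∧ U L = g ∧ V L = g := by
  have hg : g ∈ Subgroup.closure A := by rw [hA]; trivial
  induction hg using Subgroup.closure_induction with
  | mem x hx =>
    refine ⟨[(x, x⁻¹)], ?_, by simp [U], by simp [V]⟩
    intro p hp
    simp only [List.mem_singleton] at hp
    subst hp
    exact Or.inl (Or.inl (Or.inl ⟨x, hx, rfl⟩))
  | one => exact ⟨[], by intro p hp; simp at hp, by simp [U], by simp [V]⟩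
  | mul x y _ _ hx hy =>
    obtain ⟨L₁, h₁, hU₁, hV₁⟩ := hx
    obtain ⟨L₂, h₂, hU₂, hV₂⟩ := hy
    exact ⟨L₁ ++ L₂, h₁.append A R h₂, by rw [U_append, hU₁, hU₂],
      by rw [V_append, hV₁, hV₂]⟩
  | inv x _ hx =>
    obtain ⟨L, h, hU, hV⟩ := hx
    exact ⟨(L.map star).reverse, h.starRev A R, by rw [U_starRev, hU],
      by rw [V_starRev, hV]⟩

/-- The key predicate. -/
def P (w : G) : Prop := ∃ L : List (G × G), Good A R L ∧ w * U L = V L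

lemma P_one : P A R (1 : G) := ⟨[], by intro p hp; simp at hp, by simp [U, V]⟩

lemma P_mul {w₁ w₂ : G} (h₁ : P A R w₁) (h₂ : P A R w₂) (hA : Subgroup.closure A = ⊤) :
    P A R (w₁ * w₂) := by
  obtain ⟨L₁, hg₁, he₁⟩ := h₁
  obtain ⟨L₂, hg₂, he₂⟩ := h₂
  obtain ⟨C, hgC, hUC, hVC⟩ := exists_letters A R hA w₂⁻¹
  obtain ⟨D, hgD, hUD, hVD⟩ := exists_letters A R hA (V L₁)⁻¹
  refine ⟨C ++ L₁ ++ D ++ L₂, ((hgC.append A R hg₁).append A R hgD).append A R hg₂, ?_⟩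
  simp only [U_append, V_append, hUC, hVC, hUD, hVD]
  calc w₁ * w₂ * (w₂⁻¹ * U L₁ * (V L₁)⁻¹ * U L₂)
      = (w₁ * U L₁) * (V L₁)⁻¹ * U L₂ := by group
    _ = U L₂ := by rw [he₁]; group
    _ = w₂⁻¹ * (w₂ * U L₂) := by group
    _ = w₂⁻¹ * V L₁ * (V L₁)⁻¹ * V L₂ := by rw [he₂]; group

lemma P_inv {w : G} (h : P A R w) (hA : Subgroup.closure A = ⊤) : P A R w⁻¹ := by
  obtain ⟨L, hg, he⟩ := h
  obtain ⟨C, hgC, hUC, hVC⟩ := exists_letters A R hA (V L)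
  refine ⟨C ++ (L.map star).reverse, hgC.append A R (hg.starRev A R), ?_⟩
  rw [U_append, V_append, U_starRev, V_starRev, hUC, hVC]
  have : U L = w⁻¹ * V L := by rw [← he]; group
  rw [this]; group

lemma P_conj {r g : G} (hr : r ∈ R) (hA : Subgroup.closure A = ⊤) :
    P A R (g * r * g⁻¹) := by
  obtain ⟨C, hgC, hUC, hVC⟩ := exists_letters A R hA g
  refine ⟨C ++ [(r⁻¹, 1)], hgC.append A R ?_, ?_⟩
  · intro p hp
    simp only [List.mem_singleton] at hp
    subst hp
    exact Or.inr ⟨r, hr, rfl⟩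
  · rw [U_append, V_append, hUC, hVC]
    simp only [U, V, List.map_cons, List.map_nil, List.prod_cons, List.prod_nil, inv_one, mul_one]
    group

end PcpAux

/-- Claim 2 of Proposition 4.2: `w` is trivial in `G ⧸ ⟪R⟫` iff there is a finite
sequence of pairs `(uᵢ, vᵢ)` from `D_R` with `w u₁ u₂ ⋯ u_M = v₁⁻¹ v₂⁻¹ ⋯ v_M⁻¹`
in `G`; i.e. the word problem in the quotient reduces to `GPCP(G)`. -/
theorem quotient_trivial_iff_gpcp {G : Type*} [Group G] (A R : Set G)
    (hA : Subgroup.closure A = ⊤) (hR : R.Finite) (w : G) :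
    ((w : G ⧸ Subgroup.normalClosure R) = 1) ↔
      ∃ L : List (G × G), (∀ p ∈ L, p ∈ pcpPairs A R) ∧
        w * (L.map Prod.fst).prod = (L.map (fun p => p.2⁻¹)).prod := by
  rw [QuotientGroup.eq_one_iff]
  constructor
  · intro hw
    have : PcpAux.P A R w := by
      rw [Subgroup.normalClosure] at hw
      induction hw using Subgroup.closure_induction with
      | mem x hx =>
        obtain ⟨r, hr, hconj⟩ := Group.mem_conjugatesOfSet_iff.1 hx
        obtain ⟨c, rfl⟩ := isConj_iff.1 hconj
        exact PcpAux.P_conj A R hr hA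
      | one => exact PcpAux.P_one A R
      | mul x y _ _ hx hy => exact PcpAux.P_mul A R hx hy hA
      | inv x _ hx => exact PcpAux.P_inv A R hx hA
    exact this
  · rintro ⟨L, hL, hEq⟩
    rw [← QuotientGroup.eq_one_iff]
    let φ : G →* G ⧸ Subgroup.normalClosure R := QuotientGroup.mk' _
    have key : ∀ p ∈ L, φ p.1 = φ p.2⁻¹ := by
      intro p hp
      rcases hL p hp with ((⟨a, _, rfl⟩ | ⟨a, _, rfl⟩) | ⟨r, hr, rfl⟩) | ⟨r, hr, rfl⟩
      · simp
      · simp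
      · have : φ r = 1 := (QuotientGroup.eq_one_iff r).2
          (Subgroup.subset_normalClosure hr)
        simpa using this
      · have : φ r = 1 := (QuotientGroup.eq_one_iff r).2
          (Subgroup.subset_normalClosure hr)
        simp [this]
    have hUV : φ (L.map Prod.fst).prod = φ (L.map (fun p => p.2⁻¹)).prod := by
      rw [map_list_prod, map_list_prod, List.map_map, List.map_map]
      congr 1
      exact List.map_congr_left fun p hp => key p hp
    have h2 := congrArg φ hEq
    rw [map_mul, hUV, mul_eq_right] at h2
    exact h2
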